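/- For every λ ≠ 0 in ℂ, the 4-dimensional algebra L⁴₁₂(λ) with basis e₁,e₂,e₃,e₄ and nonzero products e₁e₁ = λe₃, e₁e₂ = e₄, e₂e₁ = e₃, e₂e₂ = e₃, e₂e₃ = e₄, e₃e₁ = λe₄ is a nilpotent left-symmetric algebra that is not a Novikov algebra. -/
import Mathlib


/-- Span of the set of products of an element of `S` with an element of `T`. -/
def mulSpan {V : Type*} [AddCommGroup V] [Module ℂ V] (mul : V → V → V)
    (S T : Submodule ℂ V) : Submodule ℂ V :=
  Submodule.span ℂ {z | ∃ x ∈ S, ∃ y ∈ T, z = mul x y}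

/-- `piece mul n` is the span of all products of `n + 1` elements of the
algebra `(V, mul)`, with all possible bracketings. -/
def piece {V : Type*} [AddCommGroup V] [Module ℂ V] (mul : V → V → V) : ℕ → Submodule ℂ V
  | 0 => ⊤
  | n + 1 => ⨆ i : Fin (n + 1), mulSpan mul (piece mul i.1) (piece mul (n - i.1))

/-- An algebra is nilpotent if some power (with all bracketings) is zero. -/
def IsNilpotentMul {V : Type*} [AddCommGroup V] [Module ℂ V] (mul : V → V → V) : Prop :=
  ∃ n : ℕ, piece mul n = ⊥

/-- Multiplication of the algebra `L⁴₁₂(λ)`: on the basis `e₁, e₂, e₃, e₄`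
(indexed `0,…,3`) the nonzero products are `e₁e₁ = λe₃`, `e₁e₂ = e₄`,
`e₂e₁ = e₃`, `e₂e₂ = e₃`, `e₂e₃ = e₄`, `e₃e₁ = λe₄`. -/
def mulL412 (l : ℂ) (x y : Fin 4 → ℂ) : Fin 4 → ℂ :=
  ![0, 0, l * (x 0 * y 0) + x 1 * y 0 + x 1 * y 1,
    x 0 * y 1 + x 1 * y 2 + l * (x 2 * y 0)]

noncomputable def W1 : Submodule ℂ (Fin 4 → ℂ) where
  carrier := {v | v 0 = 0 ∧ v 1 = 0}
  add_mem' := by rintro a b ⟨h1, h2⟩ ⟨h3, h4⟩; simp_all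
  zero_mem' := by simp
  smul_mem' := by rintro c a ⟨h1, h2⟩; simp_all

noncomputable def W2 : Submodule ℂ (Fin 4 → ℂ) where
  carrier := {v | v 0 = 0 ∧ v 1 = 0 ∧ v 2 = 0}
  add_mem' := by rintro a b ⟨h1, h2, h3⟩ ⟨h4, h5, h6⟩; simp_all
  zero_mem' := by simp
  smul_mem' := by rintro c a ⟨h1, h2, h3⟩; simp_all

lemma piece1_le (l : ℂ) : piece (mulL412 l) 1 ≤ W1 := by
  rw [show (1:ℕ) = 0+1 from rfl, piece]
  apply iSup_le
  intro i
  apply Submodule.span_le.2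
  rintro z ⟨x, hx, y, hy, rfl⟩
  constructor <;> simp [mulL412]

lemma piece2_le (l : ℂ) : piece (mulL412 l) 2 ≤ W2 := by
  rw [show (2:ℕ) = 1+1 from rfl, piece]
  apply iSup_le
  intro i
  apply Submodule.span_le.2
  rintro z ⟨x, hx, y, hy, rfl⟩
  fin_cases i
  · simp only [Fin.val_zero, Nat.sub_zero] at hx hy
    have hy' := piece1_le l hy
    obtain ⟨hy0, hy1⟩ := hy'
    refine ⟨by simp [mulL412], by simp [mulL412], ?_⟩
    show l * (x 0 * y 0) + x 1 * y 0 + x 1 * y 1 = 0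
    rw [hy0, hy1]; ring
  · have hx' := piece1_le l hx
    obtain ⟨hx0, hx1⟩ := hx'
    refine ⟨by simp [mulL412], by simp [mulL412], ?_⟩
    show l * (x 0 * y 0) + x 1 * y 0 + x 1 * y 1 = 0
    rw [hx0, hx1]; ring

lemma piece3_eq (l : ℂ) : piece (mulL412 l) 3 = ⊥ := by
  apply le_bot_iff.mp
  rw [show (3:ℕ) = 2+1 from rfl, piece]
  apply iSup_le
  intro i
  apply Submodule.span_le.2
  rintro z ⟨x, hx, y, hy, rfl⟩
  simp only [SetLike.mem_coe, Submodule.mem_bot]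
  fin_cases i
  · simp only [Fin.val_zero, Nat.sub_zero] at hx hy
    obtain ⟨hy0, hy1, hy2⟩ := piece2_le l hy
    funext j; fin_cases j <;>
      simp [mulL412, hy0, hy1, hy2]
  · obtain ⟨hx0, hx1⟩ := piece1_le l hx
    obtain ⟨hy0, hy1⟩ := piece1_le l (by simpa using hy)
    funext j; fin_cases j <;>
      simp [mulL412, hx0, hx1, hy0, hy1]
  · obtain ⟨hx0, hx1, hx2⟩ := piece2_le l hx
    funext j; fin_cases j <;>
      simp [mulL412, hx0, hx1, hx2]

/-- for every `λ ≠ 0`, the algebra `L⁴₁₂(λ)` is a nilpotent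
left-symmetric algebra that is not a Novikov algebra. -/
theorem L412_nilpotent_leftSymmetric_not_novikov (l : ℂ) (hl : l ≠ 0) :
    (∀ x y z : Fin 4 → ℂ,
      mulL412 l (mulL412 l x y) z - mulL412 l x (mulL412 l y z) =
      mulL412 l (mulL412 l y x) z - mulL412 l y (mulL412 l x z)) ∧
    IsNilpotentMul (mulL412 l) ∧
    ¬ (∀ x y z : Fin 4 → ℂ,
        mulL412 l (mulL412 l x y) z = mulL412 l (mulL412 l x z) y) := by
  refine ⟨?_, ⟨3, piece3_eq l⟩, ?_⟩
  · intro x y z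
    funext i
    fin_cases i <;> simp [mulL412] <;> ring
  · intro h
    have := congrFun (h ![0,1,0,0] ![0,1,0,0] ![1,0,0,0]) 3
    simp [mulL412] at this
    exact hl this
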